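/- The maximum of V over (0,∞) equals 8/27. Setting μ̃₀ = √(μ₀² + 8/27) and h₀ = φ₀'/φ₀, the following bounds hold: (1) −μ̃₀ ≤ h₀(x) for all x ≥ 0; (2) h₀(x) ≤ −μ₀ for all x ≥ x₀, where x₀ is the unique zero of V in (0,∞); and (3) lim_{x→+∞} h₀(x) = −μ₀. -/

import Mathlib

open Real MeasureTheory Filter

noncomputable def Qs (x : ℝ) : ℝ := (3/2) * (1 / Real.cosh (x/2))^2
noncomputable def Hs (x : ℝ) : ℝ := Real.tanh (x/2)
noncomputable def alphaFn (x : ℝ) : ℝ := (1/3) * (Real.sinh x + x)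
noncomputable def alphaInv : ℝ → ℝ := Function.invFun alphaFn
noncomputable def Qt (x : ℝ) : ℝ := Qs (alphaInv x)
noncomputable def Ht (x : ℝ) : ℝ := Hs (alphaInv x)
noncomputable def Vpot (x : ℝ) : ℝ := 2 * (Qt x)^2 * (1 - Qt x)

set_option maxHeartbeats 1000000

lemma alphaFn_hasDerivAt (x : ℝ) : HasDerivAt alphaFn ((1/3) * (Real.cosh x + 1)) x := by
  unfold alphaFn
  have h := ((Real.hasDerivAt_sinh x).add (hasDerivAt_id x)).const_mul (1/3 : ℝ)
  simpa using h

lemma alphaFn_strictMono : StrictMono alphaFn := by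
  apply strictMono_of_deriv_pos
  intro x
  rw [(alphaFn_hasDerivAt x).deriv]
  have := Real.cosh_pos (x := x)
  nlinarith

lemma alphaFn_continuous : Continuous alphaFn := by unfold alphaFn; fun_prop

lemma alphaFn_surjective : Function.Surjective alphaFn := by
  apply alphaFn_continuous.surjective
  · apply Filter.tendsto_atTop_mono'
      Filter.atTop (f₁ := fun x : ℝ => x / 3)
    · filter_upwards [Filter.eventually_ge_atTop (0:ℝ)] with x hx
      have h0 : 0 ≤ Real.sinh x := by
        rw [← Real.sinh_zero]; exact Real.sinh_le_sinh.mpr hx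
      show x / 3 ≤ (1/3) * (Real.sinh x + x)
      nlinarith
    · exact Filter.Tendsto.atTop_div_const (by norm_num) Filter.tendsto_id
  · apply Filter.tendsto_atBot_mono'
      Filter.atBot (f₁ := fun x : ℝ => x / 3)
    · filter_upwards [Filter.eventually_le_atBot (0:ℝ)] with x hx
      have h0 : Real.sinh x ≤ 0 := by
        rw [← Real.sinh_zero]; exact Real.sinh_le_sinh.mpr hx
      show (1/3) * (Real.sinh x + x) ≤ x / 3
      nlinarith
    · exact Filter.Tendsto.atBot_div_const (by norm_num) Filter.tendsto_id

lemma alphaInv_alphaFn (y : ℝ) : alphaInv (alphaFn y) = y :=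
  Function.leftInverse_invFun alphaFn_strictMono.injective y

lemma alphaFn_alphaInv (x : ℝ) : alphaFn (alphaInv x) = x :=
  Function.rightInverse_invFun alphaFn_surjective x

lemma alphaInv_mono : Monotone alphaInv := by
  intro x y hxy
  by_contra hcon
  push_neg at hcon
  have := alphaFn_strictMono hcon
  rw [alphaFn_alphaInv, alphaFn_alphaInv] at this
  linarith

lemma alphaInv_zero : alphaInv 0 = 0 := by
  have h : alphaFn 0 = 0 := by simp [alphaFn]
  conv_lhs => rw [← h]
  rw [alphaInv_alphaFn]

lemma Qt_pos (x : ℝ) : 0 < Qt x := by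
  have := Real.cosh_pos (x := alphaInv x / 2)
  unfold Qt Qs
  positivity

lemma Vpot_le (x : ℝ) : Vpot x ≤ 8/27 := by
  have hq := Qt_pos x
  unfold Vpot
  nlinarith [mul_nonneg (sq_nonneg (Qt x - 2/3)) (by linarith : (0:ℝ) ≤ Qt x + 1/3)]

lemma Vpot_nonneg_of {x0 : ℝ} (hx0pos : 0 < x0) (hx0 : Vpot x0 = 0) :
    ∀ x, x0 ≤ x → 0 ≤ Vpot x := by
  have hq0 : Qt x0 = 1 := by
    have hp := Qt_pos x0
    unfold Vpot at hx0
    rcases mul_eq_zero.mp hx0 with h | h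
    · exfalso
      rcases mul_eq_zero.mp h with h' | h'
      · norm_num at h'
      · nlinarith [pow_eq_zero_iff (n := 2) (by norm_num) |>.mp h']
    · linarith
  intro x hx
  have hy0 : (0:ℝ) ≤ alphaInv x0 := by
    rw [← alphaInv_zero]; exact alphaInv_mono hx0pos.le
  have hyy : alphaInv x0 ≤ alphaInv x := alphaInv_mono hx
  have hcosh : Real.cosh (alphaInv x0 / 2) ≤ Real.cosh (alphaInv x / 2) := by
    rw [Real.cosh_le_cosh, abs_of_nonneg (by linarith), abs_of_nonneg (by linarith)]
    linarith
  have hc0 : 0 < Real.cosh (alphaInv x0 / 2) := Real.cosh_pos _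
  have hqle : Qt x ≤ Qt x0 := by
    unfold Qt Qs
    have h1 : 1 / Real.cosh (alphaInv x / 2) ≤ 1 / Real.cosh (alphaInv x0 / 2) :=
      one_div_le_one_div_of_le hc0 hcosh
    have h2 : 0 ≤ 1 / Real.cosh (alphaInv x / 2) := by positivity
    nlinarith
  rw [hq0] at hqle
  have hqpos := Qt_pos x
  unfold Vpot
  nlinarith

lemma Vpot_small : ∀ η : ℝ, 0 < η → ∃ X : ℝ, ∀ x, X ≤ x → Vpot x ≤ η := by
  intro η hη
  refine ⟨alphaFn (-Real.log (η/72)/2), fun x hx => ?_⟩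
  set y := alphaInv x with hy
  have hyM : -Real.log (η/72)/2 ≤ y := by
    have := alphaInv_mono hx
    rwa [alphaInv_alphaFn] at this
  have hq : Qt x ≤ 6 * Real.exp (-y) := by
    have hc : Real.exp (y/2) / 2 ≤ Real.cosh (y/2) := by
      rw [Real.cosh_eq]
      have := Real.exp_pos (-(y/2))
      linarith
    have hcpos : (0:ℝ) < Real.exp (y/2) / 2 := by positivity
    have hc2 : (Real.exp (y/2)/2)^2 ≤ Real.cosh (y/2)^2 := by nlinarith [Real.cosh_pos (x := y/2)]
    have h1 : 1 / Real.cosh (y/2)^2 ≤ 1 / ((Real.exp (y/2)/2)^2) :=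
      one_div_le_one_div_of_le (by positivity) hc2
    have hexp : Real.exp (y/2)^2 = Real.exp y := by
      rw [sq, ← Real.exp_add]; ring_nf
    have h2 : 1 / ((Real.exp (y/2)/2)^2) = 4 * Real.exp (-y) := by
      rw [div_pow, hexp, Real.exp_neg]
      field_simp
      norm_num
    unfold Qt Qs
    rw [one_div_pow] at *
    calc (3/2) * (1 / Real.cosh (y/2)^2) ≤ (3/2) * (1/((Real.exp (y/2)/2)^2)) := by
          apply mul_le_mul_of_nonneg_left h1 (by norm_num)
      _ = 6 * Real.exp (-y) := by rw [h2]; ring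
  have hqpos := Qt_pos x
  have hVq : Vpot x ≤ 2 * (Qt x)^2 := by
    unfold Vpot; nlinarith
  have hexp2 : Real.exp (-y)^2 = Real.exp (-(2*y)) := by
    rw [sq, ← Real.exp_add]; ring_nf
  have h3 : Real.exp (-(2*y)) ≤ η/72 := by
    rw [← Real.exp_log (show (0:ℝ) < η/72 by positivity)]
    apply Real.exp_le_exp.mpr
    linarith
  have hq2 : (Qt x)^2 ≤ 36 * Real.exp (-(2*y)) := by nlinarith [Real.exp_pos (-y)]
  calc Vpot x ≤ 2 * (Qt x)^2 := hVq
    _ ≤ 72 * Real.exp (-(2*y)) := by linarith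
    _ ≤ η := by linarith

lemma exists_Vpot_max : ∃ x ∈ Set.Ioi (0:ℝ), Vpot x = 8/27 := by
  have h5 : Real.sqrt 5 ^ 2 = 5 := Real.sq_sqrt (by norm_num)
  have h5pos : 0 < Real.sqrt 5 := Real.sqrt_pos.mpr (by norm_num)
  set t : ℝ := (3 + Real.sqrt 5)/2 with ht
  have ht1 : 1 < t := by rw [ht]; linarith
  have htpos : 0 < t := by linarith
  set y : ℝ := 2 * Real.log t with hy
  have hypos : 0 < y := by
    have := Real.log_pos ht1
    positivity
  have hcosh : Real.cosh (y/2) = 3/2 := by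
    have h2 : y/2 = Real.log t := by rw [hy]; ring
    rw [h2, Real.cosh_eq, Real.exp_log htpos, Real.exp_neg, Real.exp_log htpos]
    rw [div_eq_div_iff (by norm_num) (by norm_num)]
    field_simp
    nlinarith
  have hQs : Qs y = 2/3 := by
    unfold Qs; rw [hcosh]; norm_num
  refine ⟨alphaFn y, ?_, ?_⟩
  · show 0 < alphaFn y
    have hs : 0 < Real.sinh y := by
      rw [← Real.sinh_zero]; exact Real.sinh_lt_sinh.mpr hypos
    unfold alphaFn
    nlinarith
  · unfold Vpot Qt
    rw [alphaInv_alphaFn y, hQs]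
    norm_num

lemma barrier_lower {f g : ℝ → ℝ} (hf : ∀ x, HasDerivAt f (g x) x) {a c : ℝ}
    (ha : c ≤ f a) (hg : ∀ x, a ≤ x → f x = c → 0 < g x) :
    ∀ x, a ≤ x → c ≤ f x := by
  intro b hb
  by_contra hfb
  push_neg at hfb
  have hcont : Continuous f := by
    rw [continuous_iff_continuousAt]; exact fun x => (hf x).continuousAt
  set T : Set ℝ := Set.Icc a b ∩ {x | c ≤ f x} with hT
  have hTne : T.Nonempty := ⟨a, ⟨le_rfl, hb⟩, ha⟩
  have hTbdd : BddAbove T := ⟨b, fun x hx => hx.1.2⟩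
  have hTclosed : IsClosed T :=
    isClosed_Icc.inter (isClosed_le continuous_const hcont)
  set s := sSup T with hs
  have hsT : s ∈ T := hTclosed.csSup_mem hTne hTbdd
  have has : a ≤ s := hsT.1.1
  have hsb : s ≤ b := hsT.1.2
  have hfs : c ≤ f s := hsT.2
  have hslt : s < b := lt_of_le_of_ne hsb (by intro h; rw [h] at hfs; linarith)
  -- find t > s in T : contradiction
  have key : ∃ t, t ∈ T ∧ s < t := by
    rcases eq_or_lt_of_le hfs with heqc | hltc
    · -- f s = c : use positive derivative
      have hgs : 0 < g s := hg s has heqc.symm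
      have hslope : Filter.Tendsto (slope f s) (nhdsWithin s {s}ᶜ) (nhds (g s)) :=
        hasDerivAt_iff_tendsto_slope.mp (hf s)
      have h1 : ∀ᶠ t in nhdsWithin s (Set.Ioi s), 0 < slope f s t := by
        have h1' : ∀ᶠ t in nhdsWithin s {s}ᶜ, 0 < slope f s t :=
          hslope.eventually (eventually_gt_nhds hgs)
        exact h1'.filter_mono (nhdsWithin_mono s (fun t ht => ne_of_gt ht))
      have h2 : ∀ᶠ t in nhdsWithin s (Set.Ioi s), t ∈ Set.Ioo s b :=
        Ioo_mem_nhdsGT_of_mem ⟨le_rfl, hslt⟩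
      obtain ⟨t, ht1, ht2⟩ := (h1.and h2).exists
      refine ⟨t, ⟨⟨has.trans ht2.1.le, ht2.2.le⟩, ?_⟩, ht2.1⟩
      have hts : 0 < t - s := sub_pos.mpr ht2.1
      rw [slope_def_field, div_eq_mul_inv] at ht1
      have hpos2 : 0 < f t - f s := by
        nlinarith [mul_pos ht1 hts, inv_pos.mpr hts]
      show c ≤ f t
      linarith [heqc.le]
    · -- f s > c : continuity
      have h1 : ∀ᶠ t in nhds s, c < f t :=
        (hcont.continuousAt (x := s)).eventually (eventually_gt_nhds hltc)
      have h1' : ∀ᶠ t in nhdsWithin s (Set.Ioi s), c < f t := h1.filter_mono nhdsWithin_le_nhds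
      have h2 : ∀ᶠ t in nhdsWithin s (Set.Ioi s), t ∈ Set.Ioo s b :=
        Ioo_mem_nhdsGT_of_mem ⟨le_rfl, hslt⟩
      obtain ⟨t, ht1, ht2⟩ := (h1'.and h2).exists
      exact ⟨t, ⟨⟨has.trans ht2.1.le, ht2.2.le⟩, ht1.le⟩, ht2.1⟩
  obtain ⟨t, htT, hst⟩ := key
  have := le_csSup hTbdd htT
  rw [← hs] at this
  linarith

lemma barrier_upper {f g : ℝ → ℝ} (hf : ∀ x, HasDerivAt f (g x) x) {a c : ℝ}
    (ha : f a ≤ c) (hg : ∀ x, a ≤ x → f x = c → g x < 0) :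
    ∀ x, a ≤ x → f x ≤ c := by
  have := barrier_lower (f := fun x => -f x) (g := fun x => -g x)
    (fun x => (hf x).neg) (a := a) (c := -c) (by linarith)
    (fun x hx hfx => by
      have hfc : f x = c := by linarith
      linarith [hg x hx hfc])
  intro x hx
  have := this x hx
  linarith

lemma growth_linear {f g : ℝ → ℝ} {a κ : ℝ}
    (hf : ∀ x, a ≤ x → HasDerivAt f (g x) x)
    (hκ : ∀ x, a ≤ x → κ ≤ g x) :
    ∀ x, a ≤ x → f a + κ * (x - a) ≤ f x := by
  intro b hb
  have hmem : ∀ t ∈ Set.Icc a b, HasDerivAt (fun t => f t - κ * t) (g t - κ) t := by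
    intro t ht
    exact (hf t ht.1).sub (by simpa using (hasDerivAt_id t).const_mul κ)
  have mono : MonotoneOn (fun t => f t - κ * t) (Set.Icc a b) := by
    apply monotoneOn_of_deriv_nonneg (convex_Icc a b)
    · intro t ht
      exact (hmem t ht).continuousAt.continuousWithinAt
    · intro t ht
      rw [interior_Icc] at ht
      exact (hmem t ⟨ht.1.le, ht.2.le⟩).differentiableAt.differentiableWithinAt
    · intro t ht
      rw [interior_Icc] at ht
      rw [(hmem t ⟨ht.1.le, ht.2.le⟩).deriv]
      linarith [hκ t ht.1.le]
  have := mono ⟨le_rfl, hb⟩ ⟨hb, le_rfl⟩ hb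
  simp only at this
  linarith

lemma decay_linear {f g : ℝ → ℝ} {a κ : ℝ}
    (hf : ∀ x, a ≤ x → HasDerivAt f (g x) x)
    (hκ : ∀ x, a ≤ x → g x ≤ κ) :
    ∀ x, a ≤ x → f x ≤ f a + κ * (x - a) := by
  intro b hb
  have := growth_linear (f := fun x => -f x) (g := fun x => -g x) (κ := -κ)
    (fun x hx => (hf x hx).neg) (fun x hx => by linarith [hκ x hx]) b hb
  linarith

/-- `max_{(0,∞)} V = 8/27`, and bounds and limit at infinity for
`h₀ = φ₀'/φ₀`. -/
theorem h0_bounds_and_limit (φ₀ : ℝ → ℝ) (μ₀ : ℝ)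
    (hC2 : ContDiff ℝ 2 φ₀) (hpos : ∀ x : ℝ, 0 < φ₀ x)
    (heven : ∀ x : ℝ, φ₀ (-x) = φ₀ x)
    (hL2 : Integrable (fun x => (φ₀ x)^2))
    (hμ1 : (0.808:ℝ) ≤ μ₀) (hμ2 : μ₀ ≤ (0.883:ℝ))
    (heq : ∀ x : ℝ, -(deriv (deriv φ₀) x) + Vpot x * φ₀ x = -μ₀^2 * φ₀ x)
    (hdecay : ∃ C > (0:ℝ), ∀ x : ℝ,
      |φ₀ x| + |deriv φ₀ x| ≤ C * Real.exp (-(Real.sqrt 2 / 2) * μ₀ * |x|))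
    (x0 : ℝ) (hx0pos : 0 < x0) (hx0 : Vpot x0 = 0)
    (hx0uniq : ∀ x ∈ Set.Ioi (0:ℝ), Vpot x = 0 → x = x0) :
    IsGreatest (Vpot '' Set.Ioi (0:ℝ)) (8/27) ∧
    (∀ x : ℝ, 0 ≤ x → -Real.sqrt (μ₀^2 + 8/27) ≤ deriv φ₀ x / φ₀ x) ∧
    (∀ x : ℝ, x0 ≤ x → deriv φ₀ x / φ₀ x ≤ -μ₀) ∧
    Filter.Tendsto (fun x => deriv φ₀ x / φ₀ x) Filter.atTop (nhds (-μ₀)) := by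

  obtain ⟨C, hC, hCdecay⟩ := hdecay
  have hμpos : 0 < μ₀ := lt_of_lt_of_le (by norm_num) hμ1
  set k : ℝ := Real.sqrt 2 / 2 * μ₀ with hk
  clear_value k
  have hkpos : 0 < k := by rw [hk]; exact mul_pos (by positivity) hμpos
  set m : ℝ := Real.sqrt (μ₀^2 + 8/27) with hm
  clear_value m
  have hm2 : m^2 = μ₀^2 + 8/27 := by rw [hm]; exact Real.sq_sqrt (by positivity)
  have hmpos : 0 < m := by rw [hm]; exact Real.sqrt_pos.mpr (by positivity)
  have hφdiff : Differentiable ℝ φ₀ := hC2.differentiable (by norm_num)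
  have hφ'diff : Differentiable ℝ (deriv φ₀) := by
    have h2 : ContDiff ℝ ((1:ℕ) + 1) φ₀ := by exact_mod_cast hC2
    exact ((contDiff_succ_iff_deriv.mp h2).2.2).differentiable (by norm_num)
  set h : ℝ → ℝ := fun x => deriv φ₀ x / φ₀ x with hh
  clear_value h
  have hderiv2 : ∀ x, deriv (deriv φ₀) x = (Vpot x + μ₀^2) * φ₀ x := by
    intro x
    have := heq x
    linear_combination -this
  have hhd : ∀ x, HasDerivAt h (Vpot x + μ₀^2 - (h x)^2) x := by
    intro x
    have h2 : HasDerivAt φ₀ (deriv φ₀ x) x := (hφdiff x).hasDerivAt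
    have h1 : HasDerivAt (deriv φ₀) (deriv (deriv φ₀) x) x := (hφ'diff x).hasDerivAt
    have hne : φ₀ x ≠ 0 := (hpos x).ne'
    have hd := h1.div h2 hne
    have heq2 : (deriv (deriv φ₀) x * φ₀ x - deriv φ₀ x * deriv φ₀ x) / (φ₀ x)^2
        = Vpot x + μ₀^2 - (h x)^2 := by
      rw [hderiv2 x, hh]
      field_simp
    rw [← heq2, hh]
    exact hd
  have hVle : ∀ x, Vpot x ≤ 8/27 := Vpot_le
  -- Part 2 : lower bound -m
  have part2 : ∀ x, 0 ≤ x → -m ≤ h x := by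
    intro a ha0
    by_contra hcon
    push_neg at hcon
    have hha2 : m^2 < (h a)^2 := by nlinarith
    have hub : ∀ x, a ≤ x → h x ≤ h a :=
      barrier_upper hhd le_rfl (fun x hx hfx => by
        rw [hfx]
        linarith [hVle x])
    have hhaneg : h a < 0 := by linarith
    set ε : ℝ := 1 - m^2/(h a)^2 with hε
    clear_value ε
    have hεpos : 0 < ε := by
      rw [hε]
      have h1 : m^2/(h a)^2 < 1 :=
        (div_lt_one (by nlinarith [hcon, hmpos])).mpr hha2
      linarith
    have hwd : ∀ x, a ≤ x → HasDerivAt (fun t => (h t)⁻¹)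
        (-(Vpot x + μ₀^2 - (h x)^2) / (h x)^2) x := by
      intro x hx
      have hne : h x ≠ 0 := by
        have := hub x hx; intro hzero; rw [hzero] at this; linarith
      exact (hhd x).inv hne
    have hge : ∀ x, a ≤ x → ε ≤ -(Vpot x + μ₀^2 - (h x)^2) / (h x)^2 := by
      intro x hx
      have h1 : h x ≤ h a := hub x hx
      have hx2 : (0:ℝ) < (h x)^2 := by nlinarith
      have ha2 : (0:ℝ) < (h a)^2 := by nlinarith
      have h2 : (h a)^2 ≤ (h x)^2 := by nlinarith
      have h3 : Vpot x + μ₀^2 ≤ m^2 := by linarith [hVle x]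
      rw [le_div_iff₀ hx2, hε]
      have key : m^2 ≤ m^2/(h a)^2 * (h x)^2 := by
        rw [← sub_nonneg]
        have heq3 : m^2/(h a)^2 * (h x)^2 - m^2 = m^2 * ((h x)^2 - (h a)^2)/(h a)^2 := by
          rw [div_mul_eq_mul_div, mul_sub, sub_div, mul_div_assoc (m^2) ((h a)^2), div_self ha2.ne', mul_one]
        rw [heq3]
        apply div_nonneg (mul_nonneg (sq_nonneg m) (by linarith)) ha2.le
      nlinarith
    have hgrow := growth_linear hwd hge
    set X := a + (1 - (h a)⁻¹)/ε with hX
    clear_value X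
    have hwa : (h a)⁻¹ < 0 := inv_lt_zero.mpr hhaneg
    have hXa : a ≤ X := by
      rw [hX]
      have : 0 ≤ (1 - (h a)⁻¹)/ε := div_nonneg (by linarith) hεpos.le
      linarith
    have h4 := hgrow X hXa
    have hwX : (h X)⁻¹ < 0 := by
      apply inv_lt_zero.mpr
      linarith [hub X hXa]
    have h5 : ε * (X - a) = 1 - (h a)⁻¹ := by
      rw [hX]
      field_simp
      ring
    linarith
  -- V nonneg on [x0, ∞)
  have hV0 := Vpot_nonneg_of hx0pos hx0
  -- Part 3 : upper bound -μ₀ on [x0, ∞)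
  have part3 : ∀ x, x0 ≤ x → h x ≤ -μ₀ := by
    intro b hb
    by_contra hcon
    push_neg at hcon
    set c := min (h b) 0 with hc
    clear_value c
    have hc1 : -μ₀ < c := by rw [hc]; exact lt_min hcon (by linarith)
    have hc0 : c ≤ 0 := by rw [hc]; exact min_le_right _ _
    have hcb : c ≤ h b := by rw [hc]; exact min_le_left _ _
    have hc2 : c^2 < μ₀^2 := by nlinarith
    have hlow : ∀ x, b ≤ x → c ≤ h x :=
      barrier_lower hhd hcb (fun x hx hfx => by
        have := hV0 x (hb.trans hx)
        rw [hfx]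
        nlinarith)
    have hreach : ∃ b', b ≤ b' ∧ 0 ≤ h b' := by
      by_contra hcon2
      push_neg at hcon2
      have hgb : ∀ x, b ≤ x → μ₀^2 - c^2 ≤ Vpot x + μ₀^2 - (h x)^2 := by
        intro x hx
        have h1 := hlow x hx
        have h2 := hcon2 x hx
        have := hV0 x (hb.trans hx)
        nlinarith
      have hgl := growth_linear (fun x _ => hhd x) hgb
      have hκpos : 0 < μ₀^2 - c^2 := by linarith
      set X := b + (1 - h b)/(μ₀^2 - c^2) with hX
      clear_value X
      have hXb : b ≤ X := by
        rw [hX]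
        have h2 := hcon2 b le_rfl
        have : 0 ≤ (1 - h b)/(μ₀^2 - c^2) := div_nonneg (by linarith) hκpos.le
        linarith
      have h4 := hgl X hXb
      have h5 : (μ₀^2 - c^2) * (X - b) = 1 - h b := by
        rw [hX]
        field_simp
        ring
      have := hcon2 X hXb
      linarith
    obtain ⟨b', hbb', hb'0⟩ := hreach
    have hnonneg : ∀ x, b' ≤ x → 0 ≤ h x :=
      barrier_lower hhd hb'0 (fun x hx hfx => by
        have := hV0 x (hb.trans (hbb'.trans hx))
        rw [hfx]
        nlinarith)
    have hmono : MonotoneOn φ₀ (Set.Ici b') := by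
      apply monotoneOn_of_deriv_nonneg (convex_Ici b') hφdiff.continuous.continuousOn
        hφdiff.differentiableOn
      intro t ht
      rw [interior_Ici] at ht
      have h1 : 0 ≤ h t := hnonneg t (le_of_lt ht)
      have h2 := hpos t
      have h3 : deriv φ₀ t = h t * φ₀ t := by
        simp only [hh]
        exact (div_mul_cancel₀ _ (hpos t).ne').symm
      rw [h3]
      exact mul_nonneg h1 h2.le
    have hb'pos : 0 < b' := lt_of_lt_of_le hx0pos (hb.trans hbb')
    have hPpos : 0 < φ₀ b' := hpos b'
    set X := max b' (-(Real.log (φ₀ b' / C))/k + 1) with hXdef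
    clear_value X
    have hXb' : b' ≤ X := by rw [hXdef]; exact le_max_left _ _
    have hXpos : 0 < X := lt_of_lt_of_le hb'pos hXb'
    have h1 : φ₀ b' ≤ φ₀ X := hmono (Set.mem_Ici.mpr le_rfl) (Set.mem_Ici.mpr hXb') hXb'
    have h2 : φ₀ X ≤ C * Real.exp (-(k * X)) := by
      have hd := hCdecay X
      rw [abs_of_pos hXpos] at hd
      have h3 : -(Real.sqrt 2 / 2) * μ₀ * X = -(k * X) := by rw [hk]; ring
      rw [h3] at hd
      have := abs_nonneg (deriv φ₀ X)
      calc φ₀ X ≤ |φ₀ X| := le_abs_self _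
        _ ≤ |φ₀ X| + |deriv φ₀ X| := by linarith
        _ ≤ C * Real.exp (-(k * X)) := hd
    have h3 : C * Real.exp (-(k * X)) < φ₀ b' := by
      have hPC : 0 < φ₀ b' / C := div_pos hPpos hC
      have h4 : Real.exp (-(k * X)) < φ₀ b' / C := by
        rw [← Real.exp_log hPC]
        apply Real.exp_lt_exp.mpr
        have h5 : -(Real.log (φ₀ b' / C))/k + 1 ≤ X := by rw [hXdef]; exact le_max_right _ _
        have h6 : k * (-(Real.log (φ₀ b' / C))/k + 1) ≤ k * X :=
          mul_le_mul_of_nonneg_left h5 hkpos.le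
        have h7 : k * (-(Real.log (φ₀ b' / C))/k + 1) = -Real.log (φ₀ b' / C) + k := by
          field_simp
        nlinarith
      calc C * Real.exp (-(k*X)) < C * (φ₀ b' / C) := mul_lt_mul_of_pos_left h4 hC
        _ = φ₀ b' := by field_simp
    linarith
  -- Part 4 : limit
  have part4 : Filter.Tendsto h Filter.atTop (nhds (-μ₀)) := by
    rw [Metric.tendsto_atTop]
    intro ε hε
    obtain ⟨X1, hX1⟩ := Vpot_small (μ₀ * ε) (mul_pos hμpos hε)
    refine ⟨max X1 x0, fun x hx => ?_⟩
    have hx0le : x0 ≤ x := le_trans (le_max_right _ _) hx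
    have hX1le : X1 ≤ x := le_trans (le_max_left _ _) hx
    have hup : h x ≤ -μ₀ := part3 x hx0le
    have hxnn : (0:ℝ) ≤ x := le_trans hx0pos.le hx0le
    have hlow2 : -μ₀ - ε < h x := by
      by_contra hcon
      push_neg at hcon
      have hub : ∀ t, x ≤ t → h t ≤ -μ₀ - ε :=
        barrier_upper hhd hcon (fun t ht hft => by
          have hVt : Vpot t ≤ μ₀ * ε := hX1 t (hX1le.trans ht)
          rw [hft]
          nlinarith)
      have hdec : ∀ t, x ≤ t → Vpot t + μ₀^2 - (h t)^2 ≤ -(μ₀ * ε) := by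
        intro t ht
        have h1 := hub t ht
        have hVt : Vpot t ≤ μ₀ * ε := hX1 t (hX1le.trans ht)
        nlinarith [mul_nonneg (by linarith : (0:ℝ) ≤ -(h t) - μ₀ - ε)
          (by linarith [hmpos, part2 t (le_trans hxnn ht)] : (0:ℝ) ≤ -(h t) + μ₀ + ε)]
      have hlin := decay_linear (fun t _ => hhd t) hdec
      have hxm : -m ≤ h x := part2 x hxnn
      set T := x + (h x + m)/(μ₀ * ε) + 1 with hT
      clear_value T
      have hTx : x ≤ T := by
        rw [hT]
        have : 0 ≤ (h x + m)/(μ₀ * ε) := div_nonneg (by linarith) (mul_pos hμpos hε).le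
        linarith
      have h4 := hlin T hTx
      have h5 : -(μ₀ * ε) * (T - x) = -((h x + m) + μ₀ * ε) := by
        rw [hT]
        field_simp
        ring
      have h6 : -m ≤ h T := part2 T (le_trans hxnn hTx)
      have h7 : 0 < μ₀ * ε := mul_pos hμpos hε
      linarith
    rw [Real.dist_eq, abs_lt]
    constructor
    · linarith
    · linarith
  refine ⟨⟨?_, ?_⟩, ?_, ?_, part4⟩
  · obtain ⟨x, hx, hVx⟩ := exists_Vpot_max
    exact ⟨x, hx, hVx⟩
  · rintro v ⟨x, hx, rfl⟩
    exact Vpot_le x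
  · intro x hx
    have := part2 x hx
    simpa [hh] using this
  · intro x hx
    have := part3 x hx
    simpa [hh] using this
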